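/- For complex numbers s, p, the pair (s,p) lies in the symmetrized bidisc G₂ if and only if 2|s - s̄p| + |s² - 4p| + |s|² < 4. -/

import Mathlib

open Complex ComplexConjugate

def G2 : Set (ℂ × ℂ) :=
  {w | ∃ z₁ z₂ : ℂ, ‖z₁‖ < 1 ∧ ‖z₂‖ < 1 ∧ w = (z₁ + z₂, z₁ * z₂)}

private lemma key_identity (s q : ℂ) :
    Complex.normSq (4*s - conj s * s^2 + conj s * q^2)
      = 16 * ((conj s * q).re)^2
        + Complex.normSq s * ((4 - Complex.normSq s - Complex.normSq q)^2
            - 4 * ((conj s * q).re)^2) := by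
  simp [pow_two, Complex.normSq_apply, Complex.mul_re, Complex.mul_im, Complex.conj_re,
    Complex.conj_im]
  ring

private lemma real_key (A a2 t2 u : ℝ) (hA0 : 0 ≤ A) (ha2 : 0 ≤ a2) (ha4 : a2 < 4)
    (hc : 2*A < 4 - a2 - t2)
    (hid : 16*A^2 = 16*u^2 + a2*((4-a2-t2)^2 - 4*u^2)) :
    a2 + t2 + 2*u < 4 ∧ a2 + t2 - 2*u < 4 := by
  have hc0 : 0 < 4 - a2 - t2 := lt_of_le_of_lt (by linarith) hc
  have habs : 2*|u| < 4 - a2 - t2 := by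
    by_contra h'
    push_neg at h'
    have h4u : (4 - a2 - t2)^2 ≤ 4*u^2 := by
      nlinarith [abs_nonneg u, _root_.sq_abs u]
    have key : 4*(4 - a2 - t2)^2 ≤ 16*A^2 := by
      nlinarith [mul_nonneg (by linarith : (0:ℝ) ≤ 4 - a2)
        (by linarith : (0:ℝ) ≤ 4*u^2 - (4 - a2 - t2)^2)]
    nlinarith
  constructor <;> nlinarith [le_abs_self u, neg_abs_le u]

theorem stmt_4 (s p : ℂ) :
    (s, p) ∈ G2 ↔
      2 * ‖s - conj s * p‖ + ‖s ^ 2 - 4 * p‖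
          + ‖s‖ ^ 2 < 4 := by
  constructor
  · rintro ⟨z₁, z₂, hz₁, hz₂, hw⟩
    rw [Prod.ext_iff] at hw
    obtain ⟨hs, hp⟩ := hw
    simp only at hs hp
    subst hs; subst hp
    have ha0 : 0 ≤ ‖z₁‖ := norm_nonneg _
    have hb0 : 0 ≤ ‖z₂‖ := norm_nonneg _
    have hdec : z₁ + z₂ - conj (z₁ + z₂) * (z₁ * z₂)
        = z₁ * ((1 - Complex.normSq z₂ : ℝ) : ℂ) + z₂ * ((1 - Complex.normSq z₁ : ℝ) : ℂ) := by
      apply Complex.ext <;>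
        simp [Complex.normSq_apply, Complex.mul_re, Complex.mul_im] <;> ring
    have hb1 : (0:ℝ) ≤ 1 - Complex.normSq z₂ := by
      nlinarith [Complex.sq_norm z₂]
    have ha1 : (0:ℝ) ≤ 1 - Complex.normSq z₁ := by
      nlinarith [Complex.sq_norm z₁]
    have hA : ‖z₁ + z₂ - conj (z₁ + z₂) * (z₁ * z₂)‖
        ≤ ‖z₁‖ * (1 - ‖z₂‖^2)
          + ‖z₂‖ * (1 - ‖z₁‖^2) := by
      rw [hdec]
      refine le_trans (norm_add_le _ _) ?_
      rw [norm_mul, norm_mul, Complex.norm_real, Complex.norm_real,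
        Real.norm_eq_abs, Real.norm_eq_abs,
        _root_.abs_of_nonneg hb1, _root_.abs_of_nonneg ha1,
        ← Complex.sq_norm z₁, ← Complex.sq_norm z₂]
    have hsq : (z₁ + z₂)^2 - 4 * (z₁ * z₂) = (z₁ - z₂)^2 := by ring
    have hD : ‖(z₁ - z₂)^2‖ = ‖z₁ - z₂‖ ^ 2 := norm_pow _ _
    have hpar : ‖z₁ - z₂‖^2 + ‖z₁ + z₂‖^2
        = 2*‖z₁‖^2 + 2*‖z₂‖^2 := by
      rw [Complex.sq_norm, Complex.sq_norm, Complex.sq_norm, Complex.sq_norm]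
      simp [Complex.normSq_apply]
      ring
    rw [hsq, hD]
    nlinarith [mul_pos (mul_pos (by linarith : (0:ℝ) < 1 - ‖z₁‖)
        (by linarith : (0:ℝ) < 1 - ‖z₂‖))
        (by linarith : (0:ℝ) < ‖z₁‖ + ‖z₂‖ + 2)]
  · intro h
    obtain ⟨q, hq⟩ := IsAlgClosed.exists_pow_nat_eq (s^2 - 4*p) (by norm_num : 0 < 2)
    have habsq : ‖s^2 - 4*p‖ = Complex.normSq q := by
      rw [← hq, norm_pow, Complex.sq_norm]
    have hA0 : 0 ≤ ‖s - conj s * p‖ := norm_nonneg _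
    have hid : 16 * ‖s - conj s * p‖^2
        = 16*((conj s * q).re)^2
          + Complex.normSq s * ((4 - Complex.normSq s - Complex.normSq q)^2
              - 4*((conj s * q).re)^2) := by
      have h4 : (4:ℂ) * (s - conj s * p) = 4*s - conj s * s^2 + conj s * q^2 := by
        linear_combination (-(conj s)) * hq
      have h5 : Complex.normSq ((4:ℂ) * (s - conj s * p))
          = Complex.normSq (4*s - conj s * s^2 + conj s * q^2) := by rw [h4]
      rw [map_mul, key_identity] at h5
      have h16 : Complex.normSq (4:ℂ) = 16 := by
        simp [Complex.normSq_apply]; norm_num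
      rw [h16] at h5
      rw [Complex.sq_norm]
      linarith
    rw [habsq, Complex.sq_norm] at h
    have ha2' : 0 ≤ Complex.normSq s := Complex.normSq_nonneg s
    have ht2' : 0 ≤ Complex.normSq q := Complex.normSq_nonneg q
    obtain ⟨key1, key2⟩ := real_key (‖s - conj s * p‖) (Complex.normSq s)
      (Complex.normSq q) ((conj s * q).re) hA0 ha2' (by linarith) (by linarith) hid
    have hplus : ‖s + q‖^2
        = Complex.normSq s + Complex.normSq q + 2*((conj s * q).re) := by
      rw [Complex.sq_norm]
      simp [Complex.normSq_apply, Complex.mul_re]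
      ring
    have hminus : ‖s - q‖^2
        = Complex.normSq s + Complex.normSq q - 2*((conj s * q).re) := by
      rw [Complex.sq_norm]
      simp [Complex.normSq_apply, Complex.mul_re]
      ring
    refine ⟨(s + q)/2, (s - q)/2, ?_, ?_, ?_⟩
    · rw [norm_div, Complex.norm_two, div_lt_one (by norm_num : (0:ℝ) < 2)]
      nlinarith [norm_nonneg (s + q)]
    · rw [norm_div, Complex.norm_two, div_lt_one (by norm_num : (0:ℝ) < 2)]
      nlinarith [norm_nonneg (s - q)]
    · have hs : s = (s+q)/2 + (s-q)/2 := by ring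
      have hp : p = (s+q)/2 * ((s-q)/2) := by linear_combination (1/4 : ℂ) * hq
      exact Prod.ext hs hp
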